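/- Let R_1, …, R_n be a REP instance in boundary B with (integral) optimal density k, and let k_f be the infimum, over all fractional solutions r, of the supremum over points p ∈ B of the fractional density of r at p. Then k/4 ≤ k_f ≤ k. -/

import Mathlib

/-- One of the four axis-aligned escape directions. -/
inductive Dir | left | right | up | down
deriving DecidableEq

instance : Fintype Dir :=
  ⟨{Dir.left, Dir.right, Dir.up, Dir.down}, fun x => by cases x <;> simp⟩

/-- A closed axis-aligned rectangle `[xmin,xmax] × [ymin,ymax]`. -/
structure Rect where
  xmin : ℝ
  xmax : ℝ
  ymin : ℝ
  ymax : ℝ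

/-- The point set of a rectangle. -/
def Rect.pts (r : Rect) : Set (ℝ × ℝ) :=
  {p | r.xmin ≤ p.1 ∧ p.1 ≤ r.xmax ∧ r.ymin ≤ p.2 ∧ p.2 ≤ r.ymax}

/-- The rectangle is a genuine (nonempty) closed rectangle. -/
def Rect.proper (r : Rect) : Prop := r.xmin ≤ r.xmax ∧ r.ymin ≤ r.ymax

/-- The boundary box `B = [0,W] × [0,H]`. -/
def boundaryBox (W H : ℝ) : Set (ℝ × ℝ) := {p | 0 ≤ p.1 ∧ p.1 ≤ W ∧ 0 ≤ p.2 ∧ p.2 ≤ H}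

/-- The rectangle is contained in the boundary box `[0,W] × [0,H]`. -/
def Rect.inB (W H : ℝ) (r : Rect) : Prop :=
  0 ≤ r.xmin ∧ r.xmax ≤ W ∧ 0 ≤ r.ymin ∧ r.ymax ≤ H

/-- The escape path of a rectangle in a given direction, inside `[0,W] × [0,H]`. -/
def Rect.escape (W H : ℝ) (r : Rect) : Dir → Set (ℝ × ℝ)
  | Dir.right => {p | r.xmin ≤ p.1 ∧ p.1 ≤ W ∧ r.ymin ≤ p.2 ∧ p.2 ≤ r.ymax}
  | Dir.left  => {p | 0 ≤ p.1 ∧ p.1 ≤ r.xmax ∧ r.ymin ≤ p.2 ∧ p.2 ≤ r.ymax}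
  | Dir.up    => {p | r.xmin ≤ p.1 ∧ p.1 ≤ r.xmax ∧ r.ymin ≤ p.2 ∧ p.2 ≤ H}
  | Dir.down  => {p | r.xmin ≤ p.1 ∧ p.1 ≤ r.xmax ∧ 0 ≤ p.2 ∧ p.2 ≤ r.ymax}

/-- Density at point `p` of the escape assignment `σ` restricted to the subfamily `S`. -/
noncomputable def density {n : ℕ} (W H : ℝ) (R : Fin n → Rect) (S : Set (Fin n))
    (σ : Fin n → Dir) (p : ℝ × ℝ) : ℕ :=
  {i | i ∈ S ∧ p ∈ (R i).escape W H (σ i)}.ncard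

/-- The optimal (minimum over assignments of the maximum over points of `B`) density of
the subfamily `S`. -/
noncomputable def optDensity {n : ℕ} (W H : ℝ) (R : Fin n → Rect) (S : Set (Fin n)) : ℕ :=
  sInf {k | ∃ σ : Fin n → Dir, ∀ p ∈ boundaryBox W H, density W H R S σ p ≤ k}

/-- `R j` blocks `R i` in direction `α`. -/
def blocks {n : ℕ} (W H : ℝ) (R : Fin n → Rect) (α : Dir) (j i : Fin n) : Prop :=
  j ≠ i ∧ ¬ Disjoint (R j).pts ((R i).escape W H α)

/-- `R i` is free in direction `α` within the subfamily `S`: no other rectangle of `S`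
blocks it in direction `α`. -/
def free {n : ℕ} (W H : ℝ) (R : Fin n → Rect) (S : Set (Fin n)) (i : Fin n) (α : Dir) : Prop :=
  ∀ j ∈ S, j ≠ i → Disjoint ((R i).escape W H α) (R j).pts

/-- `peel W H R ℓ` is the set of indices remaining after removing peeling levels `1,…,ℓ`. -/
def peel {n : ℕ} (W H : ℝ) (R : Fin n → Rect) : ℕ → Set (Fin n)
  | 0 => Set.univ
  | ℓ + 1 => {i ∈ peel W H R ℓ | ¬ ∃ α, free W H R (peel W H R ℓ) i α}

/-- The peeling level of rectangle `R i` (the least `ℓ` at which it has been removed). -/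
noncomputable def levelOf {n : ℕ} (W H : ℝ) (R : Fin n → Rect) (i : Fin n) : ℕ :=
  sInf {ℓ | i ∉ peel W H R ℓ}

/-- The number `ρ` of nonempty peeling levels. -/
noncomputable def numLevels {n : ℕ} (W H : ℝ) (R : Fin n → Rect) : ℕ :=
  sInf {ℓ | peel W H R ℓ = ∅}

/-- For a REP instance with integral optimal density `k`, the optimal
fractional density `k_f` (infimum over fractional solutions of the supremum of the
fractional density over `B`) satisfies `k/4 ≤ k_f ≤ k`. -/
theorem fractional_vs_integral_density {n : ℕ} (W H : ℝ) (R : Fin n → Rect)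
    (hprop : ∀ i, (R i).proper) (hin : ∀ i, (R i).inB W H)
    (k : ℕ) (hk : k = optDensity W H R Set.univ)
    (kf : ℝ)
    (hkf : kf = sInf {s : ℝ | ∃ r : Fin n → Dir → ℝ,
        (∀ i α, 0 ≤ r i α ∧ r i α ≤ 1) ∧ (∀ i, 1 ≤ ∑ α : Dir, r i α) ∧
        ∀ p ∈ boundaryBox W H,
          ∑ i : Fin n, ∑ α : Dir, ((R i).escape W H α).indicator (fun _ => r i α) p ≤ s}) :
    (k : ℝ) / 4 ≤ kf ∧ kf ≤ k := by

  classical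
  set B := boundaryBox W H with hB
  -- density as a sum of indicators
  have hdens : ∀ (σ : Fin n → Dir) (p : ℝ × ℝ),
      ((density W H R Set.univ σ p : ℕ) : ℝ)
        = ∑ i : Fin n, if p ∈ (R i).escape W H (σ i) then (1:ℝ) else 0 := by
    intro σ p
    have h1 : density W H R Set.univ σ p
        = (Finset.univ.filter fun i => p ∈ (R i).escape W H (σ i)).card := by
      unfold density
      rw [← Set.ncard_coe_finset]
      congr 1
      ext i
      simp
    rw [h1, Finset.card_filter]
    push_cast
    rfl
  -- the set defining optDensity is nonempty
  set D := {k | ∃ σ : Fin n → Dir, ∀ p ∈ B, density W H R Set.univ σ p ≤ k} with hD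
  have hDne : D.Nonempty := by
    refine ⟨n, fun _ => Dir.left, fun p hp => ?_⟩
    unfold density
    calc {i | i ∈ Set.univ ∧ p ∈ (R i).escape W H Dir.left}.ncard
        ≤ (Set.univ : Set (Fin n)).ncard :=
          Set.ncard_le_ncard (Set.sep_subset _ _) Set.finite_univ
      _ = n := by simp [Set.ncard_univ]
  have hkD : k ∈ D := by rw [hk]; exact Nat.sInf_mem hDne
  obtain ⟨σ₀, hσ₀⟩ := hkD
  set S := {s : ℝ | ∃ r : Fin n → Dir → ℝ,
      (∀ i α, 0 ≤ r i α ∧ r i α ≤ 1) ∧ (∀ i, 1 ≤ ∑ α : Dir, r i α) ∧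
      ∀ p ∈ B, ∑ i : Fin n, ∑ α : Dir,
        ((R i).escape W H α).indicator (fun _ => r i α) p ≤ s} with hS
  -- (k : ℝ) ∈ S via the integral optimal assignment
  have hkS : (k : ℝ) ∈ S := by
    refine ⟨fun i α => if α = σ₀ i then 1 else 0, ?_, ?_, ?_⟩
    · intro i α; by_cases h : α = σ₀ i <;> simp [h]
    · intro i
      rw [Finset.sum_ite_eq' Finset.univ (σ₀ i) (fun _ => (1:ℝ))]
      simp
    · intro p hp
      have hsum : ∀ i : Fin n,
          (∑ α : Dir, ((R i).escape W H α).indicator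
            (fun _ => if α = σ₀ i then (1:ℝ) else 0) p)
          = if p ∈ (R i).escape W H (σ₀ i) then (1:ℝ) else 0 := by
        intro i
        rw [Finset.sum_eq_single (σ₀ i)]
        · simp [Set.indicator_apply]
        · intro α _ hα; simp [Set.indicator_apply, hα]
        · simp
      calc ∑ i : Fin n, ∑ α : Dir, ((R i).escape W H α).indicator
              (fun _ => if α = σ₀ i then (1:ℝ) else 0) p
          = ∑ i : Fin n, if p ∈ (R i).escape W H (σ₀ i) then (1:ℝ) else 0 := by
            exact Finset.sum_congr rfl fun i _ => hsum i
        _ = ((density W H R Set.univ σ₀ p : ℕ) : ℝ) := (hdens σ₀ p).symm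
        _ ≤ (k : ℝ) := by exact_mod_cast hσ₀ p hp
  by_cases hBne : B.Nonempty
  · obtain ⟨p₀, hp₀⟩ := hBne
    -- S is bounded below by 0
    have hbdd : BddBelow S := by
      refine ⟨0, fun s hs => ?_⟩
      obtain ⟨r, hr01, _, hbound⟩ := hs
      refine le_trans ?_ (hbound p₀ hp₀)
      refine Finset.sum_nonneg fun i _ => Finset.sum_nonneg fun α _ =>
        Set.indicator_apply_nonneg fun _ => (hr01 i α).1
    have hub : kf ≤ (k : ℝ) := by rw [hkf]; exact csInf_le hbdd hkS
    have hlb : (k : ℝ) / 4 ≤ kf := by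
      rw [hkf]
      refine le_csInf ⟨(k : ℝ), hkS⟩ fun s hs => ?_
      obtain ⟨r, hr01, hr1, hbound⟩ := hs
      -- s ≥ 0
      have hs0 : (0:ℝ) ≤ s := by
        refine le_trans ?_ (hbound p₀ hp₀)
        refine Finset.sum_nonneg fun i _ => Finset.sum_nonneg fun α _ =>
        Set.indicator_apply_nonneg fun _ => (hr01 i α).1
      -- choose a direction with weight ≥ 1/4 for each rectangle
      have hchoice : ∀ i, ∃ α, (1:ℝ)/4 ≤ r i α := by
        intro i
        by_contra hcon
        push_neg at hcon
        have : ∑ α : Dir, r i α < ∑ α : Dir, (1:ℝ)/4 :=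
          Finset.sum_lt_sum_of_nonempty ⟨Dir.left, Finset.mem_univ _⟩ fun α _ => hcon α
        have h4 : ∑ α : Dir, (1:ℝ)/4 = 1 := by
          rw [Finset.sum_const, Finset.card_univ, show Fintype.card Dir = 4 from rfl]
          norm_num
        linarith [hr1 i]
      choose σ hσ using hchoice
      -- density of σ at any p of B is at most 4s
      have hkey : ∀ p ∈ B, ((density W H R Set.univ σ p : ℕ) : ℝ) ≤ 4 * s := by
        intro p hp
        rw [hdens]
        have step : ∀ i : Fin n, (if p ∈ (R i).escape W H (σ i) then (1:ℝ) else 0)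
            ≤ ∑ α : Dir, 4 * ((R i).escape W H α).indicator (fun _ => r i α) p := by
          intro i
          by_cases h : p ∈ (R i).escape W H (σ i)
          · rw [if_pos h]
            have h1 : (1:ℝ) ≤ 4 * ((R i).escape W H (σ i)).indicator
                (fun _ => r i (σ i)) p := by
              rw [Set.indicator_of_mem h]
              linarith [hσ i]
            refine le_trans h1 (Finset.single_le_sum (f := fun α =>
              4 * ((R i).escape W H α).indicator (fun _ => r i α) p) ?_ (Finset.mem_univ _))
            intro α _
            show (0:ℝ) ≤ 4 * ((R i).escape W H α).indicator (fun _ => r i α) p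
            have := Set.indicator_apply_nonneg (s := (R i).escape W H α)
              (f := fun _ => r i α) (a := p) (fun _ => (hr01 i α).1)
            linarith
          · rw [if_neg h]
            refine Finset.sum_nonneg fun α _ => ?_
            have := Set.indicator_apply_nonneg (s := (R i).escape W H α)
              (f := fun _ => r i α) (a := p) (fun _ => (hr01 i α).1)
            linarith
        calc ∑ i : Fin n, (if p ∈ (R i).escape W H (σ i) then (1:ℝ) else 0)
            ≤ ∑ i : Fin n, ∑ α : Dir,
                4 * ((R i).escape W H α).indicator (fun _ => r i α) p :=
              Finset.sum_le_sum fun i _ => step i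
          _ = 4 * ∑ i : Fin n, ∑ α : Dir,
                ((R i).escape W H α).indicator (fun _ => r i α) p := by
              rw [Finset.mul_sum]
              exact Finset.sum_congr rfl fun i _ => (Finset.mul_sum _ _ _).symm
          _ ≤ 4 * s := by linarith [hbound p hp]
      -- hence k ≤ ⌊4s⌋
      have hfl : k ≤ Nat.floor (4 * s) := by
        rw [hk]
        refine Nat.sInf_le ⟨σ, fun p hp => ?_⟩
        exact Nat.le_floor (hkey p hp)
      have : (k : ℝ) ≤ 4 * s := by
        calc (k : ℝ) ≤ (Nat.floor (4 * s) : ℝ) := by exact_mod_cast hfl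
          _ ≤ 4 * s := Nat.floor_le (by linarith)
      linarith
    exact ⟨hlb, hub⟩
  · -- boundary box empty: everything is degenerate
    have hk0 : k = 0 := by
      rw [hk]
      refine Nat.le_zero.mp (Nat.sInf_le ⟨σ₀, fun p hp => absurd ⟨p, hp⟩ hBne⟩)
    have hSuniv : S = Set.univ := by
      ext s
      simp only [Set.mem_univ, iff_true]
      refine ⟨fun _ _ => 1/4, fun i α => by norm_num, fun i => ?_,
        fun p hp => absurd ⟨p, hp⟩ hBne⟩
      rw [Finset.sum_const, Finset.card_univ, show Fintype.card Dir = 4 from rfl]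
      norm_num
    have hkf0 : kf = 0 := by
      rw [hkf, hSuniv]
      exact Real.sInf_of_not_bddBelow fun ⟨c, hc⟩ =>
        absurd (hc (Set.mem_univ (c - 1))) (by norm_num)
    rw [hkf0, hk0]
    norm_num
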